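/- For every n and every k ≤ n, the ℂ-span of all k-th order partial derivatives of the determinant det_n has dimension exactly C(n,k)²; equivalently, dim I^{det_n, k}_{n−k} = C(n,k)² (this span consists of the span of all (n−k)×(n−k) minors of the matrix of variables). -/

import Mathlib

/-- Iterated partial derivative with respect to a list of variables. -/
noncomputable def pderivList {σ : Type*} (L : List σ) (P : MvPolynomial σ ℂ) :
    MvPolynomial σ ℂ :=
  L.foldr (fun i q => MvPolynomial.pderiv i q) P

/-- The span of all `M · ∂^k P/∂x^β` with `M` a monomial of degree `τ` and `|β| = k`, i.e.
the degree-`(deg P - k + τ)` graded component of the `k`-th Jacobian ideal of `P`. -/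
noncomputable def shiftedPartialsSpan {σ : Type*} (P : MvPolynomial σ ℂ) (k τ : ℕ) :
    Submodule ℂ (MvPolynomial σ ℂ) :=
  Submodule.span ℂ
    { q | ∃ (L : List σ) (M : σ →₀ ℕ), L.length = k ∧ (M.sum fun _ e => e) = τ ∧
        q = MvPolynomial.monomial M (1 : ℂ) * pderivList L P }

/-- The determinant of the `n × n` matrix of independent variables. -/
noncomputable def detPoly (n : ℕ) : MvPolynomial (Fin n × Fin n) ℂ :=
  Matrix.det (Matrix.of fun i j : Fin n => MvPolynomial.X (i, j))

open MvPolynomial Finset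

noncomputable def mino {n : ℕ} (m : ℕ) (r c : Fin m → Fin n) :
    MvPolynomial (Fin n × Fin n) ℂ :=
  (Matrix.of fun a b : Fin m => MvPolynomial.X (r a, c b)).det

lemma prodX {σ ι : Type*} [DecidableEq σ] (s : Finset ι) (v : ι → σ) :
    (∏ a ∈ s, (X (v a) : MvPolynomial σ ℂ)) =
      monomial (∑ a ∈ s, Finsupp.single (v a) 1) 1 := by
  induction s using Finset.cons_induction with
  | empty => simp [MvPolynomial.monomial_zero']
  | cons a s ha ih =>
      rw [Finset.prod_cons, ih, Finset.sum_cons, X, monomial_mul, one_mul]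

lemma mino_eq_sum {n m : ℕ} (r c : Fin m → Fin n) :
    mino m r c = ∑ σ : Equiv.Perm (Fin m),
      (Equiv.Perm.sign σ : ℂ) •
        monomial (∑ a : Fin m, Finsupp.single (r (σ a), c a) 1) (1 : ℂ) := by
  rw [mino, Matrix.det_apply]
  refine Finset.sum_congr rfl fun σ _ => ?_
  have : (∏ i : Fin m, Matrix.of (fun a b : Fin m => (X (r a, c b) : MvPolynomial (Fin n × Fin n) ℂ)) (σ i) i)
      = ∏ i : Fin m, (X (r (σ i), c i) : MvPolynomial (Fin n × Fin n) ℂ) := rfl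
  rw [this, prodX]
  simp [Units.smul_def, MvPolynomial.smul_eq_C_mul]

lemma pderiv_mino_eq_zero {n m : ℕ} (r c : Fin m → Fin n) (x : Fin n × Fin n)
    (hx : ∀ a b, (r a, c b) ≠ x) : pderiv x (mino m r c) = 0 := by
  rw [mino_eq_sum, map_sum]
  refine Finset.sum_eq_zero fun σ _ => ?_
  rw [Derivation.map_smul, pderiv_monomial]
  have : (∑ a : Fin m, Finsupp.single (r (σ a), c a) 1) x = 0 := by
    rw [Finsupp.finset_sum_apply]
    exact Finset.sum_eq_zero fun a _ => Finsupp.single_eq_of_ne' (hx (σ a) a)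
  simp [this]

lemma pderiv_mino {n m : ℕ} (r c : Fin (m + 1) → Fin n)
    (hr : Function.Injective r) (hc : Function.Injective c) (a0 b0 : Fin (m + 1)) :
    pderiv (r a0, c b0) (mino (m + 1) r c) =
      ((-1 : ℂ) ^ (a0 + b0 : ℕ)) •
        mino m (r ∘ a0.succAbove) (c ∘ b0.succAbove) := by
  set x : Fin n × Fin n := (r a0, c b0) with hxdef
  rw [mino, Matrix.det_succ_row _ a0, map_sum]
  have hterm : ∀ j : Fin (m + 1),
      pderiv x ((-1 : MvPolynomial (Fin n × Fin n) ℂ) ^ (a0 + j : ℕ) *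
        (Matrix.of fun a b : Fin (m+1) => (X (r a, c b) : MvPolynomial (Fin n × Fin n) ℂ)) a0 j *
        ((Matrix.of fun a b : Fin (m+1) => (X (r a, c b) : MvPolynomial (Fin n × Fin n) ℂ)).submatrix
          a0.succAbove j.succAbove).det)
      = (if j = b0 then ((-1 : ℂ) ^ (a0 + b0 : ℕ)) •
          mino m (r ∘ a0.succAbove) (c ∘ b0.succAbove) else 0) := by
    intro j
    have hsub : ((Matrix.of fun a b : Fin (m+1) =>
        (X (r a, c b) : MvPolynomial (Fin n × Fin n) ℂ)).submatrix a0.succAbove j.succAbove).det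
        = mino m (r ∘ a0.succAbove) (c ∘ j.succAbove) := rfl
    have hMneg : ((-1 : MvPolynomial (Fin n × Fin n) ℂ) ^ (a0 + j : ℕ)) =
        C ((-1 : ℂ) ^ (a0 + j : ℕ)) := by
      rw [map_pow, map_neg, map_one]
    have hDzero : pderiv x (mino m (r ∘ a0.succAbove) (c ∘ j.succAbove)) = 0 := by
      apply pderiv_mino_eq_zero
      intro a b
      simp only [hxdef, Function.comp_apply, ne_eq, Prod.mk.injEq, not_and]
      intro h
      exact absurd (hr h) (Fin.succAbove_ne a0 a)
    rw [mul_assoc, hMneg, pderiv_C_mul, hsub, pderiv_mul, hDzero, mul_zero, add_zero]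
    have : (Matrix.of fun a b : Fin (m+1) =>
        (X (r a, c b) : MvPolynomial (Fin n × Fin n) ℂ)) a0 j = X (r a0, c j) := rfl
    rw [this]
    by_cases hj : j = b0
    · subst hj
      rw [pderiv_X_self, one_mul, if_pos rfl, MvPolynomial.smul_eq_C_mul]
    · rw [pderiv_X_of_ne (fun h => hj (hc (congrArg Prod.snd h))), zero_mul, mul_zero, if_neg hj]
  rw [Finset.sum_congr rfl fun j _ => hterm j]
  simp

noncomputable def minoCan {n : ℕ} (m : ℕ) (S T : Finset (Fin n))
    (hS : S.card = m) (hT : T.card = m) : MvPolynomial (Fin n × Fin n) ℂ :=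
  mino m (S.orderEmbOfFin hS) (T.orderEmbOfFin hT)

lemma orderEmb_comp_succAbove {n m : ℕ} (S : Finset (Fin n)) (hS : S.card = m + 1)
    (a0 : Fin (m + 1)) (hS' : (S.erase (S.orderEmbOfFin hS a0)).card = m) :
    (fun a => S.orderEmbOfFin hS (a0.succAbove a)) =
      (S.erase (S.orderEmbOfFin hS a0)).orderEmbOfFin hS' := by
  apply Finset.orderEmbOfFin_unique
  · intro a
    rw [Finset.mem_erase]
    exact ⟨fun h => (Fin.succAbove_ne a0 a) ((S.orderEmbOfFin hS).injective h),
      Finset.orderEmbOfFin_mem _ _ _⟩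
  · exact (S.orderEmbOfFin hS).strictMono.comp (Fin.strictMono_succAbove a0)

lemma card_erase_of_card {n m : ℕ} {S : Finset (Fin n)} (hS : S.card = m + 1) {i : Fin n}
    (hi : i ∈ S) : (S.erase i).card = m := by
  rw [Finset.card_erase_of_mem hi, hS]
  rfl

lemma pderiv_minoCan {n m : ℕ} (S T : Finset (Fin n)) (hS : S.card = m + 1)
    (hT : T.card = m + 1) {i j : Fin n} (hi : i ∈ S) (hj : j ∈ T) :
    ∃ ε : ℂ, ε ≠ 0 ∧ pderiv (i, j) (minoCan (m + 1) S T hS hT) =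
      ε • minoCan m (S.erase i) (T.erase j)
        (card_erase_of_card hS hi) (card_erase_of_card hT hj) := by
  have hiR : i ∈ Set.range (S.orderEmbOfFin hS) := by
    rw [Finset.range_orderEmbOfFin]; exact hi
  have hjR : j ∈ Set.range (T.orderEmbOfFin hT) := by
    rw [Finset.range_orderEmbOfFin]; exact hj
  obtain ⟨a0, ha0⟩ := hiR
  obtain ⟨b0, hb0⟩ := hjR
  refine ⟨(-1 : ℂ) ^ (a0 + b0 : ℕ), by simp, ?_⟩
  subst ha0 hb0
  rw [minoCan, pderiv_mino _ _ (S.orderEmbOfFin hS).injective (T.orderEmbOfFin hT).injective]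
  congr 1
  rw [minoCan]
  congr 1
  · exact orderEmb_comp_succAbove S hS a0 _
  · exact orderEmb_comp_succAbove T hT b0 _

lemma pderiv_minoCan_zero {n m : ℕ} (S T : Finset (Fin n)) (hS : S.card = m)
    (hT : T.card = m) {i j : Fin n} (h : i ∉ S ∨ j ∉ T) :
    pderiv (i, j) (minoCan m S T hS hT) = 0 := by
  apply pderiv_mino_eq_zero
  intro a b
  intro hab
  obtain ⟨h1, h2⟩ := Prod.mk_inj.mp hab
  rcases h with h | h
  · exact h (h1 ▸ Finset.orderEmbOfFin_mem S hS a)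
  · exact h (h2 ▸ Finset.orderEmbOfFin_mem T hT b)

noncomputable def minorSpan (n m : ℕ) : Submodule ℂ (MvPolynomial (Fin n × Fin n) ℂ) :=
  Submodule.span ℂ { q | ∃ (S T : Finset (Fin n)) (hS : S.card = m) (hT : T.card = m),
    q = minoCan m S T hS hT }

lemma minoCan_mem_minorSpan {n m : ℕ} (S T : Finset (Fin n)) (hS : S.card = m)
    (hT : T.card = m) : minoCan m S T hS hT ∈ minorSpan n m :=
  Submodule.subset_span ⟨S, T, hS, hT, rfl⟩

lemma pderiv_mem_minorSpan {n m : ℕ} (x : Fin n × Fin n)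
    {P : MvPolynomial (Fin n × Fin n) ℂ} (hP : P ∈ minorSpan n (m + 1)) :
    pderiv x P ∈ minorSpan n m := by
  rw [minorSpan] at hP
  induction hP using Submodule.span_induction with
  | mem q hq =>
    obtain ⟨S, T, hS, hT, rfl⟩ := hq
    obtain ⟨i, j⟩ := x
    by_cases hij : i ∈ S ∧ j ∈ T
    · obtain ⟨ε, -, hε⟩ := pderiv_minoCan S T hS hT hij.1 hij.2
      rw [hε]
      exact Submodule.smul_mem _ _ (minoCan_mem_minorSpan _ _ _ _)
    · rw [pderiv_minoCan_zero S T hS hT (by tauto)]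
      exact Submodule.zero_mem _
  | zero => simp
  | add a b _ _ ha hb => rw [map_add]; exact add_mem ha hb
  | smul c a _ ha => rw [Derivation.map_smul]; exact Submodule.smul_mem _ _ ha

lemma pderivList_mem_minorSpan {n : ℕ} (L : List (Fin n × Fin n)) (m : ℕ)
    {P : MvPolynomial (Fin n × Fin n) ℂ} (hP : P ∈ minorSpan n m) (hL : L.length ≤ m) :
    pderivList L P ∈ minorSpan n (m - L.length) := by
  induction L with
  | nil => simpa [pderivList] using hP
  | cons x L ih =>
    have hL' : L.length + 1 ≤ m := by simpa using hL
    have hmem := ih (by omega)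
    have h2 : m - L.length = (m - (L.length + 1)) + 1 := by omega
    rw [h2] at hmem
    exact pderiv_mem_minorSpan x hmem

lemma detPoly_eq_minoCan (n : ℕ) :
    detPoly n = minoCan n Finset.univ Finset.univ (by simp) (by simp) := by
  have hemb : ((Finset.univ : Finset (Fin n)).orderEmbOfFin (by simp) : Fin n → Fin n) = id :=
    (Finset.orderEmbOfFin_unique (by simp) (fun x => Finset.mem_univ x) strictMono_id).symm
  rw [minoCan, mino]
  unfold detPoly
  congr 1
  ext a b
  simp [hemb]

lemma minoCan_congr {n m : ℕ} {S T S' T' : Finset (Fin n)} (h1 : S = S') (h2 : T = T')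
    (hS : S.card = m) (hT : T.card = m) (hS' : S'.card = m) (hT' : T'.card = m) :
    minoCan m S T hS hT = minoCan m S' T' hS' hT' := by subst h1 h2; rfl

lemma minoCan_cast {n m m' : ℕ} (h : m = m') {S T : Finset (Fin n)}
    (hS : S.card = m) (hT : T.card = m) (hS' : S.card = m') (hT' : T.card = m') :
    minoCan m S T hS hT = minoCan m' S T hS' hT' := by subst h; rfl

lemma pderivList_minoCan {n m : ℕ} (S T : Finset (Fin n))
    (hS : S.card = m) (hT : T.card = m) :
    ∀ (L : List (Fin n × Fin n)),
      (L.map Prod.fst).Nodup → (L.map Prod.snd).Nodup →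
      (∀ p ∈ L, p.1 ∈ S ∧ p.2 ∈ T) → L.length ≤ m →
      ∀ (hS' : (S \ (L.map Prod.fst).toFinset).card = m - L.length)
        (hT' : (T \ (L.map Prod.snd).toFinset).card = m - L.length),
      ∃ c : ℂ, c ≠ 0 ∧ pderivList L (minoCan m S T hS hT) =
        c • minoCan (m - L.length) (S \ (L.map Prod.fst).toFinset)
          (T \ (L.map Prod.snd).toFinset) hS' hT' := by
  intro L
  induction L with
  | nil =>
    intro _ _ _ _ hS' hT'
    refine ⟨1, one_ne_zero, ?_⟩
    rw [one_smul]
    exact minoCan_congr (by simp) (by simp) _ _ _ _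
  | cons p L ih =>
    intro hf hs hmem hlen hS' hT'
    obtain ⟨i, j⟩ := p
    simp only [List.map_cons, List.nodup_cons] at hf hs
    have hlen' : L.length ≤ m := by simp at hlen; omega
    have ht1 : m - L.length = (m - (L.length + 1)) + 1 := by
      simp only [List.length_cons] at hlen; omega
    have hS'' : (S \ (L.map Prod.fst).toFinset).card = m - L.length := by
      rw [Finset.card_sdiff_of_subset, List.card_toFinset, hf.2.dedup, hS]
      · simp
      · intro x hx
        simp only [List.mem_toFinset, List.mem_map] at hx
        obtain ⟨q, hq, rfl⟩ := hx
        exact (hmem q (List.mem_cons_of_mem _ hq)).1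
    have hT'' : (T \ (L.map Prod.snd).toFinset).card = m - L.length := by
      rw [Finset.card_sdiff_of_subset, List.card_toFinset, hs.2.dedup, hT]
      · simp
      · intro x hx
        simp only [List.mem_toFinset, List.mem_map] at hx
        obtain ⟨q, hq, rfl⟩ := hx
        exact (hmem q (List.mem_cons_of_mem _ hq)).2
    obtain ⟨c, hc, hcd⟩ := ih hf.2 hs.2
      (fun q hq => hmem q (List.mem_cons_of_mem _ hq)) hlen' hS'' hT''
    -- rewrite in terms of t + 1
    rw [ht1] at hS'' hT''
    have hi : i ∈ S \ (L.map Prod.fst).toFinset := by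
      rw [Finset.mem_sdiff]
      refine ⟨(hmem (i, j) List.mem_cons_self).1, ?_⟩
      simp only [List.mem_toFinset]
      exact hf.1
    have hj : j ∈ T \ (L.map Prod.snd).toFinset := by
      rw [Finset.mem_sdiff]
      refine ⟨(hmem (i, j) List.mem_cons_self).2, ?_⟩
      simp only [List.mem_toFinset]
      exact hs.1
    obtain ⟨ε, hε, hεd⟩ := pderiv_minoCan _ _ hS'' hT'' hi hj
    refine ⟨c * ε, mul_ne_zero hc hε, ?_⟩
    have hstep : pderivList ((i, j) :: L) (minoCan m S T hS hT)
        = pderiv (i, j) (pderivList L (minoCan m S T hS hT)) := rfl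
    rw [hstep, hcd, Derivation.map_smul,
      minoCan_cast ht1 _ _ hS'' hT'', hεd, smul_smul]
    congr 1
    refine minoCan_congr ?_ ?_ _ _ hS' hT'
    · ext x
      simp only [Finset.mem_erase, Finset.mem_sdiff, List.map_cons, List.toFinset_cons,
        List.mem_toFinset, Finset.mem_insert]
      tauto
    · ext x
      simp only [Finset.mem_erase, Finset.mem_sdiff, List.map_cons, List.toFinset_cons,
        List.mem_toFinset, Finset.mem_insert]
      tauto

lemma minoCan_mem_shifted {n k : ℕ} (hk : k ≤ n) (S T : Finset (Fin n))
    (hS : S.card = n - k) (hT : T.card = n - k) :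
    minoCan (n - k) S T hS hT ∈ shiftedPartialsSpan (detPoly n) k 0 := by
  classical
  set LS := Sᶜ.sort (· ≤ ·) with hLS
  set LT := Tᶜ.sort (· ≤ ·) with hLT
  have hSlen : LS.length = k := by
    rw [hLS, Finset.length_sort, Finset.card_compl, hS, Fintype.card_fin]; omega
  have hTlen : LT.length = k := by
    rw [hLT, Finset.length_sort, Finset.card_compl, hT, Fintype.card_fin]; omega
  set L := LS.zip LT with hL
  have hmapf : L.map Prod.fst = LS := List.map_fst_zip (by rw [hSlen, hTlen])
  have hmaps : L.map Prod.snd = LT := List.map_snd_zip (by rw [hSlen, hTlen])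
  have hLlen : L.length = k := by rw [hL, List.length_zip, hSlen, hTlen, min_self]
  have hfinS : LS.toFinset = Sᶜ := Finset.sort_toFinset _ _
  have hfinT : LT.toFinset = Tᶜ := Finset.sort_toFinset _ _
  have hsetS : Finset.univ \ (L.map Prod.fst).toFinset = S := by
    rw [hmapf, hfinS]; simp
  have hsetT : Finset.univ \ (L.map Prod.snd).toFinset = T := by
    rw [hmaps, hfinT]; simp
  have hS'' : (Finset.univ \ (L.map Prod.fst).toFinset).card = n - L.length := by
    rw [hsetS, hS, hLlen]
  have hT'' : (Finset.univ \ (L.map Prod.snd).toFinset).card = n - L.length := by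
    rw [hsetT, hT, hLlen]
  obtain ⟨c, hc, hcd⟩ := pderivList_minoCan (Finset.univ) (Finset.univ)
    (by simp) (by simp) L
    (by rw [hmapf]; exact Finset.sort_nodup _ _)
    (by rw [hmaps]; exact Finset.sort_nodup _ _)
    (fun p _ => ⟨Finset.mem_univ _, Finset.mem_univ _⟩)
    (by rw [hLlen]; exact hk) hS'' hT''
  have hdet : pderivList L (detPoly n) = c • minoCan (n - k) S T hS hT := by
    rw [detPoly_eq_minoCan, hcd]
    congr 1
    have hA : (Finset.univ \ (L.map Prod.fst).toFinset).card = n - k := by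
      rw [hsetS, hS]
    have hB : (Finset.univ \ (L.map Prod.snd).toFinset).card = n - k := by
      rw [hsetT, hT]
    exact (minoCan_cast (by rw [hLlen]) _ _ hA hB).trans
      (minoCan_congr hsetS hsetT _ _ _ _)
  have hgen : pderivList L (detPoly n) ∈ shiftedPartialsSpan (detPoly n) k 0 := by
    apply Submodule.subset_span
    refine ⟨L, 0, hLlen, by simp, ?_⟩
    rw [MvPolynomial.monomial_zero', map_one, one_mul]
  have hsm := Submodule.smul_mem (shiftedPartialsSpan (detPoly n) k 0) c⁻¹ hgen
  rwa [hdet, smul_smul, inv_mul_cancel₀ hc, one_smul] at hsm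

lemma shifted_eq_minorSpan {n k : ℕ} (hk : k ≤ n) :
    shiftedPartialsSpan (detPoly n) k 0 = minorSpan n (n - k) := by
  apply le_antisymm
  · rw [shiftedPartialsSpan, Submodule.span_le]
    rintro q ⟨L, M, hL, hM, rfl⟩
    have hM0 : M = 0 := by
      rw [Finsupp.sum] at hM
      ext a
      by_cases ha : a ∈ M.support
      · exact (Finset.sum_eq_zero_iff.mp hM) a ha
      · exact Finsupp.notMem_support_iff.mp ha
    subst hM0
    rw [MvPolynomial.monomial_zero', map_one, one_mul]
    have hdet : detPoly n ∈ minorSpan n n := by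
      rw [detPoly_eq_minoCan]; exact minoCan_mem_minorSpan _ _ _ _
    have := pderivList_mem_minorSpan L n hdet (hL ▸ hk)
    rwa [hL] at this
  · rw [minorSpan, Submodule.span_le]
    rintro q ⟨S, T, hS, hT, rfl⟩
    exact minoCan_mem_shifted hk S T hS hT

section indep

variable {n m : ℕ}

noncomputable def diagExp (S T : Finset (Fin n)) (hS : S.card = m) (hT : T.card = m) :
    (Fin n × Fin n) →₀ ℕ :=
  ∑ a : Fin m, Finsupp.single (S.orderEmbOfFin hS a, T.orderEmbOfFin hT a) 1

lemma exp_eq_diag {S T S' T' : Finset (Fin n)} (hS : S.card = m) (hT : T.card = m)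
    (hS' : S'.card = m) (hT' : T'.card = m) (σ : Equiv.Perm (Fin m))
    (h : (∑ a : Fin m, Finsupp.single (S'.orderEmbOfFin hS' (σ a), T'.orderEmbOfFin hT' a) 1)
        = diagExp S T hS hT) :
    S' = S ∧ T' = T ∧ σ = 1 := by
  classical
  set r : Fin m → Fin n := ⇑(S.orderEmbOfFin hS) with hrdef
  set c : Fin m → Fin n := ⇑(T.orderEmbOfFin hT) with hcdef
  set r' : Fin m → Fin n := ⇑(S'.orderEmbOfFin hS') with hr'def
  set c' : Fin m → Fin n := ⇑(T'.orderEmbOfFin hT') with hc'def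
  have key : ∀ a : Fin m, ∃ a' : Fin m, r a' = r' (σ a) ∧ c a' = c' a := by
    intro a
    have happ : (∑ b : Fin m, (Finsupp.single (r' (σ b), c' b) 1 : (Fin n × Fin n) →₀ ℕ))
        (r' (σ a), c' a) = (diagExp S T hS hT) (r' (σ a), c' a) := by rw [h]
    rw [Finsupp.finset_sum_apply, diagExp, Finsupp.finset_sum_apply] at happ
    have hpos : 0 < ∑ b : Fin m,
        (Finsupp.single (r' (σ b), c' b) 1 : (Fin n × Fin n) →₀ ℕ) (r' (σ a), c' a) := by
      apply Finset.sum_pos' (fun b _ => Nat.zero_le _)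
      exact ⟨a, Finset.mem_univ a, by simp [Finsupp.single_apply]⟩
    rw [happ] at hpos
    obtain ⟨a', -, ha'⟩ := Finset.exists_ne_zero_of_sum_ne_zero hpos.ne'
    rw [Finsupp.single_apply] at ha'
    have : ((S.orderEmbOfFin hS) a', (T.orderEmbOfFin hT) a') = (r' (σ a), c' a) := by
      by_contra hne
      rw [if_neg hne] at ha'
      exact ha' rfl
    exact ⟨a', (Prod.mk.injEq _ _ _ _ ▸ this).1, (Prod.mk.injEq _ _ _ _ ▸ this).2⟩
  -- T' = T
  have hrangec : Set.range c' ⊆ Set.range c := by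
    rintro x ⟨a, rfl⟩
    obtain ⟨a', -, h2⟩ := key a
    exact ⟨a', h2⟩
  have hTT : T' = T := by
    have h1 : Set.range c' = ↑T' := Finset.range_orderEmbOfFin T' hT'
    have h2 : Set.range c = ↑T := Finset.range_orderEmbOfFin T hT
    rw [h1, h2] at hrangec
    apply Finset.eq_of_subset_of_card_le (by exact_mod_cast hrangec)
    rw [hT, hT']
  have hcc : c' = c := by
    subst hTT; rfl
  have key2 : ∀ a : Fin m, r (a : Fin m) = r' (σ a) := by
    intro a
    obtain ⟨a', h1, h2⟩ := key a
    rw [hcc] at h2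
    have : a' = a := (T.orderEmbOfFin hT).injective h2
    rwa [this] at h1
  have hranger : Set.range r' ⊆ Set.range r := by
    rintro x ⟨a, rfl⟩
    exact ⟨σ.symm a, by rw [key2 (σ.symm a), Equiv.apply_symm_apply]⟩
  have hSS : S' = S := by
    have h1 : Set.range r' = ↑S' := Finset.range_orderEmbOfFin S' hS'
    have h2 : Set.range r = ↑S := Finset.range_orderEmbOfFin S hS
    rw [h1, h2] at hranger
    apply Finset.eq_of_subset_of_card_le (by exact_mod_cast hranger)
    rw [hS, hS']
  have hrr : r' = r := by subst hSS; rfl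
  refine ⟨hSS, hTT, ?_⟩
  have : ∀ a, σ a = a := by
    intro a
    have h3 := key2 a
    rw [hrr] at h3
    exact ((S.orderEmbOfFin hS).injective h3).symm
  exact Equiv.ext fun a => this a

lemma coeff_diag_minoCan {S T S' T' : Finset (Fin n)} (hS : S.card = m) (hT : T.card = m)
    (hS' : S'.card = m) (hT' : T'.card = m) :
    MvPolynomial.coeff (diagExp S T hS hT) (minoCan m S' T' hS' hT')
      = if S' = S ∧ T' = T then 1 else 0 := by
  classical
  rw [minoCan, mino_eq_sum]
  rw [MvPolynomial.coeff_sum]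
  have hterm : ∀ σ : Equiv.Perm (Fin m),
      MvPolynomial.coeff (diagExp S T hS hT)
        ((Equiv.Perm.sign σ : ℂ) •
          monomial (∑ a : Fin m, Finsupp.single (S'.orderEmbOfFin hS' (σ a),
            T'.orderEmbOfFin hT' a) 1) (1 : ℂ))
      = if (∑ a : Fin m, Finsupp.single (S'.orderEmbOfFin hS' (σ a),
            T'.orderEmbOfFin hT' a) 1) = diagExp S T hS hT
          then (Equiv.Perm.sign σ : ℂ) else 0 := by
    intro σ
    rw [MvPolynomial.coeff_smul, MvPolynomial.coeff_monomial]
    by_cases hh : (∑ a : Fin m, Finsupp.single (S'.orderEmbOfFin hS' (σ a),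
            T'.orderEmbOfFin hT' a) 1) = diagExp S T hS hT
    · rw [if_pos hh, if_pos hh]; simp
    · rw [if_neg hh, if_neg hh]; simp
  rw [Finset.sum_congr rfl fun σ _ => hterm σ]
  by_cases hST : S' = S ∧ T' = T
  · obtain ⟨rfl, rfl⟩ := hST
    rw [if_pos ⟨rfl, rfl⟩]
    rw [Finset.sum_eq_single (1 : Equiv.Perm (Fin m))]
    · rw [if_pos]
      · simp
      · simp [diagExp]
    · intro σ _ hσ
      rw [if_neg]
      intro h
      exact hσ (exp_eq_diag hS' hT' hS' hT' σ h).2.2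
    · intro h; exact absurd (Finset.mem_univ _) h
  · rw [if_neg hST]
    apply Finset.sum_eq_zero
    intro σ _
    rw [if_neg]
    intro h
    obtain ⟨h1, h2, -⟩ := exp_eq_diag hS hT hS' hT' σ h
    exact hST ⟨h1, h2⟩

end indep

noncomputable def minoFam (n m : ℕ) :
    ({S : Finset (Fin n) // S.card = m} × {T : Finset (Fin n) // T.card = m}) →
      MvPolynomial (Fin n × Fin n) ℂ :=
  fun p => minoCan m p.1.1 p.2.1 p.1.2 p.2.2

lemma minoFam_linearIndependent (n m : ℕ) : LinearIndependent ℂ (minoFam n m) := by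
  rw [linearIndependent_iff']
  intro s g hsum p hp
  have hco := congrArg (MvPolynomial.coeff (diagExp p.1.1 p.2.1 p.1.2 p.2.2)) hsum
  rw [MvPolynomial.coeff_sum] at hco
  simp only [MvPolynomial.coeff_smul, MvPolynomial.coeff_zero] at hco
  rw [Finset.sum_eq_single p] at hco
  · rw [minoFam, coeff_diag_minoCan, if_pos ⟨rfl, rfl⟩, smul_eq_mul, mul_one] at hco
    exact hco
  · intro q _ hq
    rw [minoFam, coeff_diag_minoCan, if_neg, smul_eq_mul, mul_zero]
    rintro ⟨h1, h2⟩
    exact hq (Prod.ext (Subtype.ext h1) (Subtype.ext h2))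
  · intro h; exact absurd hp h

lemma minorSpan_eq_span_range (n m : ℕ) :
    minorSpan n m = Submodule.span ℂ (Set.range (minoFam n m)) := by
  rw [minorSpan]
  congr 1
  ext q
  constructor
  · rintro ⟨S, T, hS, hT, rfl⟩
    exact ⟨(⟨S, hS⟩, ⟨T, hT⟩), rfl⟩
  · rintro ⟨⟨⟨S, hS⟩, ⟨T, hT⟩⟩, rfl⟩
    exact ⟨S, T, hS, hT, rfl⟩

/-- The ℂ-span of all `k`-th order partial derivatives of `det_n` (the span of all
`(n−k)×(n−k)` minors of the matrix of variables) has dimension exactly `C(n,k)²`. -/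
theorem dim_partials_of_det (n k : ℕ) (hk : k ≤ n) :
    Module.finrank ℂ (shiftedPartialsSpan (detPoly n) k 0) = Nat.choose n k ^ 2 := by
  rw [shifted_eq_minorSpan hk, minorSpan_eq_span_range,
    finrank_span_eq_card (minoFam_linearIndependent n (n - k))]
  rw [Fintype.card_prod, Fintype.card_finset_len, Fintype.card_fin, Nat.choose_symm hk, sq]
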